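/- arXiv:1310.4150 — 2 statements merged into one kernel-verified Lean document; each statement's English description precedes it below -/
import Mathlib

section
/- Define G(x) = |x|² + |x•|² for x ∈ Z[ω]. Then for x = a + bω + cω² + dω³ with a,b,c,d ∈ ℤ, G(x) is a rational integer, and (a² + b² + c² + d²)/2 ≤ G(x) ≤ (5/2)(a² + b² + c² + d²). -/
noncomputable def om : ℂ := Complex.exp (Real.pi * Complex.I / 5)

def Zomega : Set ℂ := {z | ∃ a b c d : ℤ, z = a + b * om + c * om ^ 2 + d * om ^ 3}

theorem stmt6 (f : ℂ → ℂ)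
    (hom : f om = om ^ 3) (h1 : f 1 = 1)
    (hhom : ∀ x ∈ Zomega, ∀ y ∈ Zomega, f (x + y) = f x + f y ∧ f (x * y) = f x * f y)
    (a b c d : ℤ) (x : ℂ) (hx : x = a + b * om + c * om ^ 2 + d * om ^ 3) :
    (∃ n : ℤ, Complex.normSq x + Complex.normSq (f x) = n) ∧
      ((a ^ 2 + b ^ 2 + c ^ 2 + d ^ 2 : ℝ) / 2 ≤
        Complex.normSq x + Complex.normSq (f x)) ∧
      Complex.normSq x + Complex.normSq (f x) ≤
        5 / 2 * (a ^ 2 + b ^ 2 + c ^ 2 + d ^ 2 : ℝ) := by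
  have h5 : om ^ 5 = -1 := by
    rw [om, ← Complex.exp_nat_mul]
    rw [show ((5 : ℕ) : ℂ) * (↑Real.pi * Complex.I / 5) = ↑Real.pi * Complex.I by
      push_cast; ring, Complex.exp_pi_mul_I]
  have homI : om = Complex.exp (↑(Real.pi / 5) * Complex.I) := by
    rw [om]; congr 1; push_cast; ring
  have hre : om.re = Real.cos (Real.pi / 5) := by
    rw [homI, Complex.exp_ofReal_mul_I_re]
  have hrepos : 0 < om.re := by
    rw [hre]
    apply Real.cos_pos_of_mem_Ioo
    constructor <;> [nlinarith [Real.pi_pos]; nlinarith [Real.pi_pos]]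
  have hne : om + 1 ≠ 0 := by
    intro h
    have : om = -1 := by linear_combination h
    rw [this] at hrepos
    norm_num at hrepos
  have hmin : om ^ 4 - om ^ 3 + om ^ 2 - om + 1 = 0 := by
    have hprod : (om + 1) * (om ^ 4 - om ^ 3 + om ^ 2 - om + 1) = 0 := by
      linear_combination h5
    rcases mul_eq_zero.mp hprod with h | h
    · exact absurd h hne
    · exact h
  have hom0 : om ≠ 0 := by rw [om]; exact Complex.exp_ne_zero _
  have habs : ‖om‖ = 1 := by rw [homI]; exact Complex.norm_exp_ofReal_mul_I _
  have hnorm1 : Complex.normSq om = 1 := by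
    rw [← Complex.sq_norm, habs]; norm_num
  have hcon : (starRingEnd ℂ) om = -om ^ 4 := by
    apply mul_left_cancel₀ hom0
    rw [Complex.mul_conj, hnorm1]
    push_cast
    linear_combination h5
  -- membership lemmas
  have hZ : ∀ n : ℤ, (n : ℂ) ∈ Zomega := fun n => ⟨n, 0, 0, 0, by push_cast; ring⟩
  have hZom : om ∈ Zomega := ⟨0, 1, 0, 0, by push_cast; ring⟩
  have hZom2 : om ^ 2 ∈ Zomega := ⟨0, 0, 1, 0, by push_cast; ring⟩
  have hZ1 : (1 : ℂ) ∈ Zomega := by simpa using hZ 1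
  have hf0 : f 0 = 0 := by
    have h00 := (hhom 0 (by simpa using hZ 0) 0 (by simpa using hZ 0)).1
    simp only [add_zero] at h00
    linear_combination -h00
  have hfint : ∀ n : ℤ, f (n : ℂ) = n := by
    intro n
    induction n using Int.induction_on with
    | zero => simpa using hf0
    | succ k ih =>
      have hk := (hhom (k : ℂ) (hZ k) 1 hZ1).1
      push_cast
      push_cast at ih
      rw [hk, ih, h1]
    | pred k ih =>
      have hk := (hhom ((-(k : ℤ) - 1 : ℤ) : ℂ) (hZ _) 1 hZ1).1
      have he : ((-(k : ℤ) - 1 : ℤ) : ℂ) + 1 = (-(k : ℤ) : ℂ) := by push_cast; ring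
      rw [he] at hk
      push_cast at hk ih ⊢
      rw [hk, h1] at ih
      linear_combination ih
  -- values of f on powers of om
  have hf2 : f (om ^ 2) = om ^ 6 := by
    have := (hhom om hZom om hZom).2
    rw [hom] at this
    rw [show om ^ 2 = om * om by ring, this]; ring
  have hf3 : f (om ^ 3) = om ^ 9 := by
    have := (hhom om hZom (om ^ 2) hZom2).2
    rw [hom, hf2] at this
    rw [show om ^ 3 = om * om ^ 2 by ring, this]; ring
  have hfb : f ((b : ℂ) * om) = (b : ℂ) * om ^ 3 := by
    have := (hhom (b : ℂ) (hZ b) om hZom).2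
    rw [hfint, hom] at this; exact this
  have hfc : f ((c : ℂ) * om ^ 2) = (c : ℂ) * om ^ 6 := by
    have := (hhom (c : ℂ) (hZ c) (om ^ 2) hZom2).2
    rw [hfint, hf2] at this; exact this
  have hfd : f ((d : ℂ) * om ^ 3) = (d : ℂ) * om ^ 9 := by
    have := (hhom (d : ℂ) (hZ d) (om ^ 3) ⟨0, 0, 0, 1, by push_cast; ring⟩).2
    rw [hfint, hf3] at this; exact this
  -- f x
  have hs2 : ((a : ℂ) + (b : ℂ) * om) ∈ Zomega := ⟨a, b, 0, 0, by push_cast; ring⟩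
  have hs3 : ((a : ℂ) + (b : ℂ) * om + (c : ℂ) * om ^ 2) ∈ Zomega :=
    ⟨a, b, c, 0, by push_cast; ring⟩
  have hbm : ((b : ℂ) * om) ∈ Zomega := ⟨0, b, 0, 0, by push_cast; ring⟩
  have hcm : ((c : ℂ) * om ^ 2) ∈ Zomega := ⟨0, 0, c, 0, by push_cast; ring⟩
  have hdm : ((d : ℂ) * om ^ 3) ∈ Zomega := ⟨0, 0, 0, d, by push_cast; ring⟩
  have hfx : f x = (a : ℂ) + (b : ℂ) * om ^ 3 - (c : ℂ) * om - (d : ℂ) * om ^ 4 := by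
    rw [hx]
    rw [show (a : ℂ) + (b : ℂ) * om + (c : ℂ) * om ^ 2 + (d : ℂ) * om ^ 3 =
      ((a : ℂ) + (b : ℂ) * om + (c : ℂ) * om ^ 2) + (d : ℂ) * om ^ 3 by ring]
    rw [(hhom _ hs3 _ hdm).1, (hhom _ hs2 _ hcm).1, (hhom _ (hZ a) _ hbm).1,
      hfint, hfb, hfc, hfd]
    linear_combination ((c : ℂ) * om + (d : ℂ) * om ^ 4) * h5
  -- conjugates
  have hcx : (starRingEnd ℂ) x =
      (a : ℂ) - (b : ℂ) * om ^ 4 - (c : ℂ) * om ^ 3 - (d : ℂ) * om ^ 2 := by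
    rw [hx]
    simp only [map_add, map_mul, map_pow, hcon, map_intCast]
    linear_combination ((c : ℂ) * om ^ 3 + (d : ℂ) * om ^ 2 * (1 - om ^ 5)) * h5
  have hcy : (starRingEnd ℂ) (f x) =
      (a : ℂ) - (b : ℂ) * om ^ 2 + (c : ℂ) * om ^ 4 + (d : ℂ) * om := by
    rw [hfx]
    simp only [map_add, map_sub, map_mul, map_pow, hcon, map_intCast]
    linear_combination ((b : ℂ) * om ^ 2 * (1 - om ^ 5) -
      (d : ℂ) * om * (om ^ 10 - om ^ 5 + 1)) * h5
  -- key identity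
  set N : ℤ := 2 * (a ^ 2 + b ^ 2 + c ^ 2 + d ^ 2) +
    (a * b + b * c + c * d - a * c - b * d + a * d) with hNdef
  have key : x * (starRingEnd ℂ) x + f x * (starRingEnd ℂ) (f x) = (N : ℂ) := by
    rw [hcy, hcx, hfx, hx, hNdef]
    push_cast
    linear_combination
      ((-(a : ℂ) * b + a * c - a * d - 2 * b ^ 2 - b * c + b * d - 2 * c ^ 2 - c * d
          - 2 * d ^ 2)
        + (-2 * (b : ℂ) ^ 2 - b * c + b * d - 2 * c ^ 2 - c * d - 2 * d ^ 2) * om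
        + (-(c : ℂ) * d) * om ^ 2
        + ((b : ℂ) * c - b * d - c * d) * om ^ 3
        + (-(c : ℂ) * d) * om ^ 4) * hmin
  have hreal : Complex.normSq x + Complex.normSq (f x) = (N : ℝ) := by
    rw [Complex.mul_conj, Complex.mul_conj] at key
    exact_mod_cast key
  refine ⟨⟨N, hreal⟩, ?_, ?_⟩
  · rw [hreal, hNdef]
    push_cast
    nlinarith [sq_nonneg ((a : ℝ) + b), sq_nonneg ((c : ℝ) + d), sq_nonneg ((a : ℝ) - c),
      sq_nonneg ((b : ℝ) - d), sq_nonneg ((b : ℝ) + c), sq_nonneg ((a : ℝ) + d)]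
  · rw [hreal, hNdef]
    push_cast
    nlinarith [sq_nonneg ((a : ℝ) - b + c - d)]
end

section
/- For x ∈ Z[ω] with Gauss complexity G(x) = |x|² + |x•|², exactly one of the following holds: G(x) = 0 and x = 0; or G(x) = 2 and x = ω^k for some integer k; or G(x) ≥ 3. -/
lemma om_pow_five : om ^ 5 = -1 := by
  have h : ((5:ℕ):ℂ) * (Real.pi * Complex.I / 5) = Real.pi * Complex.I := by push_cast; ring
  rw [om, ← Complex.exp_nat_mul, h, Complex.exp_pi_mul_I]

lemma om_pow_ten : om ^ 10 = 1 := by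
  have h : om ^ 10 = (om ^ 5) ^ 2 := by ring
  rw [h, om_pow_five]; ring

lemma om_im_pos : 0 < om.im := by
  have h : om = Complex.exp ((Real.pi/5 : ℝ) * Complex.I) := by
    rw [om]; push_cast; ring_nf
  rw [h, Complex.exp_ofReal_mul_I_im]
  exact Real.sin_pos_of_pos_of_lt_pi (by positivity) (by linarith [Real.pi_pos])

lemma om_phi : om ^ 4 - om ^ 3 + om ^ 2 - om + 1 = 0 := by
  have h5 := om_pow_five
  have hne : om + 1 ≠ 0 := by
    intro h
    have him : om.im = 0 := by
      have := congrArg Complex.im h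
      simpa using this
    exact om_im_pos.ne' him
  have key : (om + 1) * (om ^ 4 - om ^ 3 + om ^ 2 - om + 1) = 0 := by
    linear_combination h5
  rcases mul_eq_zero.mp key with h | h
  · exact absurd h hne
  · exact h

lemma om_ne_zero : om ≠ 0 := by rw [om]; exact Complex.exp_ne_zero _

lemma conj_om : (starRingEnd ℂ) om = om ^ 9 := by
  have h1 : (starRingEnd ℂ) om * om = 1 := by
    rw [om, ← Complex.exp_conj, ← Complex.exp_add]
    have h : (starRingEnd ℂ) (↑Real.pi * Complex.I / 5) + ↑Real.pi * Complex.I / 5 = 0 := by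
      rw [map_div₀, map_mul, Complex.conj_ofReal, Complex.conj_I]
      have : (starRingEnd ℂ) 5 = 5 := map_ofNat _ 5
      rw [this]; ring
    rw [h, Complex.exp_zero]
  have h2 : om ^ 9 * om = 1 := by rw [← pow_succ]; exact om_pow_ten
  exact mul_right_cancel₀ om_ne_zero (h1.trans h2.symm)

set_option maxHeartbeats 2000000 in
lemma qcases (a b c d : ℤ) :
    (a = 0 ∧ b = 0 ∧ c = 0 ∧ d = 0) ∨
    ((a = 1 ∧ b = 0 ∧ c = 0 ∧ d = 0) ∨ (a = -1 ∧ b = 0 ∧ c = 0 ∧ d = 0) ∨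
     (a = 0 ∧ b = 1 ∧ c = 0 ∧ d = 0) ∨ (a = 0 ∧ b = -1 ∧ c = 0 ∧ d = 0) ∨
     (a = 0 ∧ b = 0 ∧ c = 1 ∧ d = 0) ∨ (a = 0 ∧ b = 0 ∧ c = -1 ∧ d = 0) ∨
     (a = 0 ∧ b = 0 ∧ c = 0 ∧ d = 1) ∨ (a = 0 ∧ b = 0 ∧ c = 0 ∧ d = -1) ∨
     (a = -1 ∧ b = 1 ∧ c = -1 ∧ d = 1) ∨ (a = 1 ∧ b = -1 ∧ c = 1 ∧ d = -1)) ∨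
    3 ≤ 2*(a*a+b*b+c*c+d*d) + (a*b+b*c+c*d+a*d) - (a*c+b*d) := by
  by_cases h : 2*(a*a+b*b+c*c+d*d) + (a*b+b*c+c*d+a*d) - (a*c+b*d) ≤ 2
  · have hs : a*a+b*b+c*c+d*d ≤ 4 := by
      nlinarith [sq_nonneg (a+b), sq_nonneg (a-c), sq_nonneg (a+d), sq_nonneg (b+c),
        sq_nonneg (b-d), sq_nonneg (c+d), sq_nonneg (a-b+c-d)]
    have ha1 : -2 ≤ a := by nlinarith [sq_nonneg (a+2), sq_nonneg b, sq_nonneg c, sq_nonneg d]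
    have ha2 : a ≤ 2 := by nlinarith [sq_nonneg (a-2), sq_nonneg b, sq_nonneg c, sq_nonneg d]
    have hb1 : -2 ≤ b := by nlinarith [sq_nonneg (b+2), sq_nonneg a, sq_nonneg c, sq_nonneg d]
    have hb2 : b ≤ 2 := by nlinarith [sq_nonneg (b-2), sq_nonneg a, sq_nonneg c, sq_nonneg d]
    have hc1 : -2 ≤ c := by nlinarith [sq_nonneg (c+2), sq_nonneg a, sq_nonneg b, sq_nonneg d]
    have hc2 : c ≤ 2 := by nlinarith [sq_nonneg (c-2), sq_nonneg a, sq_nonneg b, sq_nonneg d]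
    have hd1 : -2 ≤ d := by nlinarith [sq_nonneg (d+2), sq_nonneg a, sq_nonneg b, sq_nonneg c]
    have hd2 : d ≤ 2 := by nlinarith [sq_nonneg (d-2), sq_nonneg a, sq_nonneg b, sq_nonneg c]
    interval_cases a <;> interval_cases b <;> interval_cases c <;> interval_cases d <;> omega
  · right; right; omega

theorem stmt7 (f : ℂ → ℂ)
    (hom : f om = om ^ 3) (h1 : f 1 = 1)
    (hhom : ∀ x ∈ Zomega, ∀ y ∈ Zomega, f (x + y) = f x + f y ∧ f (x * y) = f x * f y)
    (x : ℂ) (hx : x ∈ Zomega) :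
    (Complex.normSq x + Complex.normSq (f x) = 0 ∧ x = 0) ∨
      (Complex.normSq x + Complex.normSq (f x) = 2 ∧ ∃ k : ℤ, x = om ^ k) ∨
      3 ≤ Complex.normSq x + Complex.normSq (f x) := by
  obtain ⟨a, b, c, d, hxeq⟩ := hx
  have fadd : ∀ x ∈ Zomega, ∀ y ∈ Zomega, f (x + y) = f x + f y :=
    fun x hx y hy => (hhom x hx y hy).1
  have fmul : ∀ x ∈ Zomega, ∀ y ∈ Zomega, f (x * y) = f x * f y :=
    fun x hx y hy => (hhom x hx y hy).2
  have memInt : ∀ n : ℤ, ((n:ℂ)) ∈ Zomega := fun n => ⟨n, 0, 0, 0, by push_cast; ring⟩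
  have m0 : (0:ℂ) ∈ Zomega := ⟨0, 0, 0, 0, by push_cast; ring⟩
  have m1 : (1:ℂ) ∈ Zomega := ⟨1, 0, 0, 0, by push_cast; ring⟩
  have memOm : om ∈ Zomega := ⟨0, 1, 0, 0, by push_cast; ring⟩
  have memOm2 : om ^ 2 ∈ Zomega := ⟨0, 0, 1, 0, by push_cast; ring⟩
  have memOm3 : om ^ 3 ∈ Zomega := ⟨0, 0, 0, 1, by push_cast; ring⟩
  have hf0 : f 0 = 0 := by
    have h := fadd 0 m0 0 m0
    rw [add_zero] at h
    linear_combination -h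
  have hfint : ∀ n : ℤ, f ((n:ℂ)) = (n:ℂ) := by
    intro n
    induction n using Int.induction_on with
    | zero => simpa using hf0
    | succ k ih =>
      have h := fadd _ (memInt (k:ℤ)) 1 m1
      rw [h1] at h
      have e : (((k:ℤ):ℂ)) + 1 = ((((k:ℤ)+1 : ℤ)):ℂ) := by push_cast; ring
      rw [e] at h
      push_cast at h ih ⊢
      linear_combination h + ih
    | pred k ih =>
      have h := fadd _ (memInt (-(k:ℤ)-1)) 1 m1
      rw [h1] at h
      have e : (((-(k:ℤ)-1 : ℤ)):ℂ) + 1 = (((-(k:ℤ) : ℤ)):ℂ) := by push_cast; ring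
      rw [e] at h
      push_cast at h ih ⊢
      linear_combination ih - h
  have hfom2 : f (om ^ 2) = om ^ 6 := by
    have h := fmul om memOm om memOm
    rw [hom] at h
    rw [pow_two, h]; ring
  have hfom3 : f (om ^ 3) = om ^ 9 := by
    have h := fmul _ memOm2 om memOm
    rw [hfom2, hom] at h
    rw [show om ^ 3 = om ^ 2 * om by ring, h]; ring
  have hfx : f x = (a:ℂ) + (b:ℂ) * om ^ 3 + (c:ℂ) * om ^ 6 + (d:ℂ) * om ^ 9 := by
    have mB : ((b:ℂ) * om) ∈ Zomega := ⟨0, b, 0, 0, by push_cast; ring⟩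
    have mC : ((c:ℂ) * om ^ 2) ∈ Zomega := ⟨0, 0, c, 0, by push_cast; ring⟩
    have mD : ((d:ℂ) * om ^ 3) ∈ Zomega := ⟨0, 0, 0, d, by push_cast; ring⟩
    have mAB : ((a:ℂ) + (b:ℂ) * om) ∈ Zomega := ⟨a, b, 0, 0, by push_cast; ring⟩
    have mABC : ((a:ℂ) + (b:ℂ) * om + (c:ℂ) * om ^ 2) ∈ Zomega := ⟨a, b, c, 0, by push_cast; ring⟩
    rw [hxeq, fadd _ mABC _ mD, fadd _ mAB _ mC, fadd _ (memInt a) _ mB,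
      fmul _ (memInt b) _ memOm, fmul _ (memInt c) _ memOm2, fmul _ (memInt d) _ memOm3,
      hfint a, hfint b, hfint c, hfint d, hom, hfom2, hfom3]
  have h10 := om_pow_ten
  have hc1 : (starRingEnd ℂ) om = om ^ 9 := conj_om
  have hc2 : (starRingEnd ℂ) (om ^ 2) = om ^ 8 := by
    rw [map_pow, hc1, show (om ^ 9) ^ 2 = om ^ 8 * om ^ 10 by ring, h10, mul_one]
  have hc3 : (starRingEnd ℂ) (om ^ 3) = om ^ 7 := by
    rw [map_pow, hc1, show (om ^ 9) ^ 3 = om ^ 7 * (om ^ 10) ^ 2 by ring, h10]; ring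
  have hc6 : (starRingEnd ℂ) (om ^ 6) = om ^ 4 := by
    rw [map_pow, hc1, show (om ^ 9) ^ 6 = om ^ 4 * (om ^ 10) ^ 5 by ring, h10]; ring
  have hc9 : (starRingEnd ℂ) (om ^ 9) = om := by
    rw [map_pow, hc1, show (om ^ 9) ^ 9 = om * (om ^ 10) ^ 8 by ring, h10]; ring
  have hval : Complex.normSq x + Complex.normSq (f x) =
      (((2*(a*a+b*b+c*c+d*d) + (a*b+b*c+c*d+a*d) - (a*c+b*d) : ℤ)) : ℝ) := by
    have key : x * (starRingEnd ℂ) x + f x * (starRingEnd ℂ) (f x) =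
        (((2*(a*a+b*b+c*c+d*d) + (a*b+b*c+c*d+a*d) - (a*c+b*d) : ℤ)) : ℂ) := by
      rw [hfx, hxeq]
      simp only [map_add, map_mul, map_intCast, hc1, hc2, hc3, hc6, hc9]
      push_cast
      linear_combination ((b:ℂ)*(d:ℂ)*om^12 + (b:ℂ)*(d:ℂ)*om^11 + (c:ℂ)*(d:ℂ)*om^9 + (b:ℂ)*(c:ℂ)*om^9 + (c:ℂ)*(d:ℂ)*om^8 + (b:ℂ)*(d:ℂ)*om^8 + (b:ℂ)*(c:ℂ)*om^8 + (c:ℂ)*(d:ℂ)*om^7 + (b:ℂ)*(c:ℂ)*om^7 + 2*(d:ℂ)*(d:ℂ)*om^6 + (c:ℂ)*(d:ℂ)*om^6 + 2*(c:ℂ)*(c:ℂ)*om^6 - (b:ℂ)*(d:ℂ)*om^6 + (b:ℂ)*(c:ℂ)*om^6 + 2*(b:ℂ)*(b:ℂ)*om^6 + 2*(d:ℂ)*(d:ℂ)*om^5 + (c:ℂ)*(d:ℂ)*om^5 + 2*(c:ℂ)*(c:ℂ)*om^5 + (b:ℂ)*(c:ℂ)*om^5 + 2*(b:ℂ)*(b:ℂ)*om^5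 + (a:ℂ)*(d:ℂ)*om^5 + (a:ℂ)*(b:ℂ)*om^5 + (b:ℂ)*(d:ℂ)*om^4 + (a:ℂ)*(d:ℂ)*om^4 + (a:ℂ)*(c:ℂ)*om^4 + (a:ℂ)*(b:ℂ)*om^4 + (a:ℂ)*(d:ℂ)*om^3 + (a:ℂ)*(c:ℂ)*om^3 + (a:ℂ)*(b:ℂ)*om^3 + (a:ℂ)*(d:ℂ)*om^2 + (a:ℂ)*(c:ℂ)*om^2 + (a:ℂ)*(b:ℂ)*om^2 - 2*(d:ℂ)*(d:ℂ)*om - (c:ℂ)*(d:ℂ)*om - 2*(c:ℂ)*(c:ℂ)*om + (b:ℂ)*(d:ℂ)*om - (b:ℂ)*(c:ℂ)*om - 2*(b:ℂ)*(b:ℂ)*om + (a:ℂ)*(c:ℂ)*om - 2*(d:ℂ)*(d:ℂ) - (c:ℂ)*(d:ℂ) - 2*(c:ℂ)*(c:ℂ) + (b:ℂ)*(d:ℂ) - (b:ℂ)*(c:ℂ) - 2*(b:ℂ)*(b:ℂ) - (a:ℂ)*(d:ℂ) + (a:ℂ)*(c:ℂ) - (a:ℂ)*(b:ℂ)) * 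om_phi
    rw [Complex.mul_conj, Complex.mul_conj] at key
    exact_mod_cast key
  rcases qcases a b c d with ⟨rfl, rfl, rfl, rfl⟩ | hu | h3
  · left
    refine ⟨by rw [hval]; norm_num, ?_⟩
    rw [hxeq]; push_cast; ring
  · right; left
    rcases hu with ⟨rfl, rfl, rfl, rfl⟩ | ⟨rfl, rfl, rfl, rfl⟩ | ⟨rfl, rfl, rfl, rfl⟩ |
      ⟨rfl, rfl, rfl, rfl⟩ | ⟨rfl, rfl, rfl, rfl⟩ | ⟨rfl, rfl, rfl, rfl⟩ |
      ⟨rfl, rfl, rfl, rfl⟩ | ⟨rfl, rfl, rfl, rfl⟩ | ⟨rfl, rfl, rfl, rfl⟩ | ⟨rfl, rfl, rfl, rfl⟩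
    · exact ⟨by rw [hval]; norm_num, 0, by rw [hxeq, zpow_zero]; push_cast; ring⟩
    · refine ⟨by rw [hval]; norm_num, 5, ?_⟩
      rw [hxeq, show ((5:ℤ)) = ((5:ℕ):ℤ) by norm_num, zpow_natCast, om_pow_five]
      push_cast; ring
    · exact ⟨by rw [hval]; norm_num, 1, by rw [hxeq, zpow_one]; push_cast; ring⟩
    · refine ⟨by rw [hval]; norm_num, 6, ?_⟩
      rw [hxeq, show ((6:ℤ)) = ((6:ℕ):ℤ) by norm_num, zpow_natCast]
      push_cast
      linear_combination (-om) * om_pow_five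
    · refine ⟨by rw [hval]; norm_num, 2, ?_⟩
      rw [hxeq, show ((2:ℤ)) = ((2:ℕ):ℤ) by norm_num, zpow_natCast]
      push_cast; ring
    · refine ⟨by rw [hval]; norm_num, 7, ?_⟩
      rw [hxeq, show ((7:ℤ)) = ((7:ℕ):ℤ) by norm_num, zpow_natCast]
      push_cast
      linear_combination (-om^2) * om_pow_five
    · refine ⟨by rw [hval]; norm_num, 3, ?_⟩
      rw [hxeq, show ((3:ℤ)) = ((3:ℕ):ℤ) by norm_num, zpow_natCast]
      push_cast; ring
    · refine ⟨by rw [hval]; norm_num, 8, ?_⟩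
      rw [hxeq, show ((8:ℤ)) = ((8:ℕ):ℤ) by norm_num, zpow_natCast]
      push_cast
      linear_combination (-om^3) * om_pow_five
    · refine ⟨by rw [hval]; norm_num, 4, ?_⟩
      rw [hxeq, show ((4:ℤ)) = ((4:ℕ):ℤ) by norm_num, zpow_natCast]
      push_cast
      linear_combination -om_phi
    · refine ⟨by rw [hval]; norm_num, 9, ?_⟩
      rw [hxeq, show ((9:ℤ)) = ((9:ℕ):ℤ) by norm_num, zpow_natCast]
      push_cast
      linear_combination om_phi - om^4 * om_pow_five
  · right; right
    rw [hval]
    exact_mod_cast h3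
end
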